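/- Let n be a positive integer and m = ⌈n/2⌉. For A ∈ ℝ^{n×n} and X ∈ ℝ^{n×m}, let Z(A,X) ∈ ℝ^{n×n} denote the matrix formed by the first n columns of the n×2m matrix [X, AX] (i.e., the columns of X followed by the columns of AX, truncated to n columns). Then the set {(A,X) ∈ ℝ^{n×n} × ℝ^{n×m} : det Z(A,X) = 0} has Lebesgue measure zero in ℝ^{n×(n+m)}. -/

import Mathlib

open Matrix MeasureTheory

/-- Zero set of a nonzero multivariate polynomial over `Fin k` is Lebesgue-null. -/
lemma volume_zero_set_mvPolynomial_fin (k : ℕ) (p : MvPolynomial (Fin k) ℝ) (hp : p ≠ 0) :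
    volume {x : Fin k → ℝ | MvPolynomial.eval x p = 0} = 0 := by
  induction k with
  | zero =>
    obtain ⟨c, rfl⟩ := MvPolynomial.C_surjective (Fin 0) p
    have hc : c ≠ 0 := fun h => hp (by simp [h])
    have : {x : Fin 0 → ℝ | MvPolynomial.eval x (MvPolynomial.C c) = 0} = ∅ := by
      ext x; simp [hc]
    rw [this]; exact measure_empty
  | succ k ih =>
    set q := MvPolynomial.finSuccEquiv ℝ k p with hqdef
    have hq0 : q ≠ 0 := by
      intro h
      apply hp
      have := congrArg (MvPolynomial.finSuccEquiv ℝ k).symm (hqdef ▸ h)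
      simpa using this
    have hlc : q.leadingCoeff ≠ 0 := Polynomial.leadingCoeff_ne_zero.2 hq0
    -- continuity / measurability of the eval map
    have hcons : Continuous fun ys : ℝ × (Fin k → ℝ) => (Fin.cons ys.1 ys.2 : Fin (k+1) → ℝ) := by
      refine continuous_pi fun i => ?_
      refine Fin.cases ?_ (fun j => ?_) i
      · simpa using continuous_fst
      · simpa using (show Continuous fun a : ℝ × (Fin k → ℝ) => a.2 j from (continuous_apply j).comp continuous_snd)
    have hT : MeasurableSet {ys : ℝ × (Fin k → ℝ) |
        MvPolynomial.eval (Fin.cons ys.1 ys.2) p = 0} := by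
      exact ((MvPolynomial.continuous_eval (p := p)).comp hcons).measurable (measurableSet_singleton 0)
    set T : Set (ℝ × (Fin k → ℝ)) :=
      {ys | MvPolynomial.eval (Fin.cons ys.1 ys.2) p = 0} with hTdef
    have hmp := measurePreserving_piFinSuccAbove (fun _ : Fin (k + 1) => (volume : Measure ℝ)) 0
    have hpre : (MeasurableEquiv.piFinSuccAbove (fun _ : Fin (k+1) => ℝ) 0) ⁻¹' T
        = {x : Fin (k+1) → ℝ | MvPolynomial.eval x p = 0} := by
      ext x
      simp only [Set.mem_preimage, hTdef, Set.mem_setOf_eq,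
        MeasurableEquiv.piFinSuccAbove_apply]
      rw [Fin.insertNthEquiv_zero]
      have hx : (Fin.cons ((Fin.consEquiv (fun _ : Fin (k+1) => ℝ)).symm x).1
          ((Fin.consEquiv (fun _ : Fin (k+1) => ℝ)).symm x).2 : Fin (k+1) → ℝ) = x := by
        simp [Fin.consEquiv, Fin.cons_self_tail]
      rw [hx]
    have hS : volume {x : Fin (k+1) → ℝ | MvPolynomial.eval x p = 0}
        = (volume.prod (volume : Measure (Fin k → ℝ))) T := by
      rw [← hpre]
      exact hmp.measure_preimage hT.nullMeasurableSet
    rw [hS]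
    -- swap the coordinates
    have hswap : (volume.prod (volume : Measure (Fin k → ℝ))) T
        = ((volume : Measure (Fin k → ℝ)).prod volume) (Prod.swap ⁻¹' T) := by
      rw [← Measure.prod_swap, Measure.map_apply measurable_swap hT]
    rw [hswap]
    have hU : MeasurableSet (Prod.swap ⁻¹' T) := measurable_swap hT
    rw [Measure.measure_prod_null hU]
    have hae : ∀ᵐ s : Fin k → ℝ, MvPolynomial.eval s q.leadingCoeff ≠ 0 := by
      rw [ae_iff]
      refine measure_mono_null (fun s hs => ?_) (ih q.leadingCoeff hlc)
      simpa using hs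
    filter_upwards [hae] with s hs
    have key : {y : ℝ | MvPolynomial.eval (Fin.cons y s) p = 0}
        = {y : ℝ | (q.map (MvPolynomial.eval s)).eval y = 0} := by
      ext y
      rw [Set.mem_setOf_eq, Set.mem_setOf_eq, MvPolynomial.eval_eq_eval_mv_eval']
    have hr : q.map (MvPolynomial.eval s) ≠ 0 := by
      intro h
      apply hs
      have h2 := congrArg (fun r => Polynomial.coeff r q.natDegree) h
      simp only [Polynomial.coeff_map, Polynomial.coeff_zero] at h2
      exact h2
    have hfin : {y : ℝ | (q.map (MvPolynomial.eval s)).eval y = 0}.Finite :=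
      Polynomial.finite_setOf_isRoot hr
    have : (Prod.mk s ⁻¹' (Prod.swap ⁻¹' T)) = {y : ℝ | MvPolynomial.eval (Fin.cons y s) p = 0} := rfl
    simp only [Pi.zero_apply] at *
    rw [this, key]
    exact hfin.measure_zero _

/-- Zero set of a nonzero multivariate polynomial over a finite index type is null. -/
lemma volume_zero_set_mvPolynomial {ι : Type*} [Fintype ι] (p : MvPolynomial ι ℝ) (hp : p ≠ 0) :
    volume {x : ι → ℝ | MvPolynomial.eval x p = 0} = 0 := by
  classical
  set k := Fintype.card ι
  set f : Fin k ≃ ι := (Fintype.equivFin ι).symm with hf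
  have hmp := volume_measurePreserving_piCongrLeft (fun _ : ι => ℝ) f
  have hScont : Continuous fun x : ι → ℝ => MvPolynomial.eval x p :=
    MvPolynomial.continuous_eval p
  have hS : MeasurableSet {x : ι → ℝ | MvPolynomial.eval x p = 0} :=
    hScont.measurable (measurableSet_singleton 0)
  rw [← hmp.measure_preimage hS.nullMeasurableSet]
  have hpre : (MeasurableEquiv.piCongrLeft (fun _ : ι => ℝ) f) ⁻¹'
      {x : ι → ℝ | MvPolynomial.eval x p = 0}
      = {y : Fin k → ℝ | MvPolynomial.eval y (MvPolynomial.rename f.symm p) = 0} := by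
    ext y
    simp only [Set.mem_preimage, Set.mem_setOf_eq, MvPolynomial.eval_rename,
      MeasurableEquiv.coe_piCongrLeft]
    have hy : (Equiv.piCongrLeft (fun _ : ι => ℝ) f) y = fun i => y (f.symm i) := by
      funext i
      have h1 := Equiv.piCongrLeft_apply_apply (fun _ : ι => ℝ) f y (f.symm i)
      rwa [Equiv.apply_symm_apply] at h1
    rw [hy]
    rfl
  rw [hpre]
  refine volume_zero_set_mvPolynomial_fin k _ (fun h => hp ?_)
  have h2 := congrArg (MvPolynomial.rename (⇑f)) h
  rwa [MvPolynomial.rename_rename, Equiv.self_comp_symm, MvPolynomial.rename_id, map_zero] at h2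

/-- Transfer of null sets along a linear equivalence between finite-dimensional spaces. -/
lemma null_of_linearEquiv_preimage_null {E F : Type*}
    [NormedAddCommGroup E] [NormedSpace ℝ E] [MeasurableSpace E] [BorelSpace E]
    [FiniteDimensional ℝ E]
    [NormedAddCommGroup F] [NormedSpace ℝ F] [MeasurableSpace F] [BorelSpace F]
    [FiniteDimensional ℝ F] [SecondCountableTopology F]
    (μ : Measure E) (ν : Measure F) [μ.IsAddHaarMeasure] [ν.IsAddHaarMeasure]
    (e : E ≃ₗ[ℝ] F) {S : Set F} (hS : MeasurableSet S) (h : μ (e ⁻¹' S) = 0) : ν S = 0 := by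
  have hhaar : (μ.map e).IsAddHaarMeasure := Measure.MapLinearEquiv.isAddHaarMeasure μ e
  have hme : Measurable e := e.toContinuousLinearEquiv.continuous.measurable
  have key := Measure.isAddLeftInvariant_eq_smul ν (μ.map e)
  rw [key, Measure.smul_apply, Measure.map_apply hme hS, h]
  simp

/-- With `m = ⌈n/2⌉`, the set of pairs `(A, X)` for which the matrix formed by the
first `n` columns of `[X, AX]` is singular has Lebesgue measure zero. -/
theorem stmt_4 (n m : ℕ) (hn : 0 < n) (hm : m = (n + 1) / 2) :
    volume {p : (Fin n → Fin n → ℝ) × (Fin n → Fin m → ℝ) |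
      (Matrix.of fun i j : Fin n =>
        if hj : (j : ℕ) < m then Matrix.of p.2 i ⟨(j : ℕ), hj⟩
        else (Matrix.of p.1 * Matrix.of p.2) i ⟨(j : ℕ) - m, by omega⟩).det = 0} = 0 := by
  classical
  set ι := (Fin n × Fin n) ⊕ (Fin n × Fin m) with hι
  -- the linear (re-indexing) equivalence
  let L : (ι → ℝ) ≃ₗ[ℝ] (Fin n → Fin n → ℝ) × (Fin n → Fin m → ℝ) :=
    { toFun := fun x => (fun i k => x (Sum.inl (i, k)), fun i j => x (Sum.inr (i, j)))
      invFun := fun p => Sum.elim (fun q => p.1 q.1 q.2) (fun q => p.2 q.1 q.2)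
      map_add' := fun x y => rfl
      map_smul' := fun c x => rfl
      left_inv := fun x => by funext z; cases z <;> rfl
      right_inv := fun p => rfl }
  -- the polynomial matrix
  set M : Matrix (Fin n) (Fin n) (MvPolynomial ι ℝ) := Matrix.of fun i j : Fin n =>
    if hj : (j : ℕ) < m then MvPolynomial.X (Sum.inr (i, ⟨(j : ℕ), hj⟩))
    else ∑ k : Fin n, MvPolynomial.X (Sum.inl (i, k)) *
      MvPolynomial.X (Sum.inr (k, ⟨(j : ℕ) - m, by omega⟩)) with hM
  -- evaluation of the polynomial matrix
  have heval : ∀ x : ι → ℝ, MvPolynomial.eval x M.det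
      = (Matrix.of fun i j : Fin n =>
          if hj : (j : ℕ) < m then Matrix.of (L x).2 i ⟨(j : ℕ), hj⟩
          else (Matrix.of (L x).1 * Matrix.of (L x).2) i ⟨(j : ℕ) - m, by omega⟩).det := by
    intro x
    rw [RingHom.map_det]
    congr 1
    rw [RingHom.mapMatrix_apply]
    ext i j
    by_cases hj : (j : ℕ) < m
    · simp [hM, hj, Matrix.map_apply, L]
      rfl
    · simp only [hM, Matrix.map_apply, Matrix.of_apply, hj, dif_neg, not_false_iff,
        map_sum, map_mul (MvPolynomial.eval x), MvPolynomial.eval_X, Matrix.mul_apply]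
      rfl
  -- continuity and measurability of the determinant map
  have hcont : Continuous fun p : (Fin n → Fin n → ℝ) × (Fin n → Fin m → ℝ) =>
      (Matrix.of fun i j : Fin n =>
        if hj : (j : ℕ) < m then Matrix.of p.2 i ⟨(j : ℕ), hj⟩
        else (Matrix.of p.1 * Matrix.of p.2) i ⟨(j : ℕ) - m, by omega⟩).det := by
    refine Continuous.matrix_det (continuous_matrix fun i j => ?_)
    by_cases hj : (j : ℕ) < m
    · simp only [Matrix.of_apply, hj, dif_pos]
      fun_prop
    · simp only [Matrix.of_apply, hj, dif_neg, not_false_iff, Matrix.mul_apply]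
      refine continuous_finset_sum _ fun k _ => Continuous.mul ?_ ?_ <;> fun_prop
  have hSmeas : MeasurableSet {p : (Fin n → Fin n → ℝ) × (Fin n → Fin m → ℝ) |
      (Matrix.of fun i j : Fin n =>
        if hj : (j : ℕ) < m then Matrix.of p.2 i ⟨(j : ℕ), hj⟩
        else (Matrix.of p.1 * Matrix.of p.2) i ⟨(j : ℕ) - m, by omega⟩).det = 0} :=
    hcont.measurable (measurableSet_singleton 0)
  -- the polynomial is nonzero: it evaluates to 1 at a suitable point
  set x0 : ι → ℝ := Sum.elim
      (fun q : Fin n × Fin n => if (q.1 : ℕ) = (q.2 : ℕ) + m then (1 : ℝ) else 0)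
      (fun q : Fin n × Fin m => if (q.1 : ℕ) = (q.2 : ℕ) then (1 : ℝ) else 0) with hx0
  have hMone : M.map (MvPolynomial.eval x0) = 1 := by
    ext i j
    by_cases hj : (j : ℕ) < m
    · simp only [hM, Matrix.map_apply, Matrix.of_apply, hj, dif_pos, MvPolynomial.eval_X,
        hx0, Sum.elim_inr, Matrix.one_apply, Fin.ext_iff]
    · have hjm : (j : ℕ) - m < n := by omega
      have hjn : (j : ℕ) < n := j.isLt
      simp only [hM, Matrix.map_apply, Matrix.of_apply, hj, dif_neg, not_false_iff,
        map_sum, map_mul (MvPolynomial.eval x0), MvPolynomial.eval_X, hx0, Sum.elim_inl, Sum.elim_inr]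
      rw [Finset.sum_eq_single (⟨(j : ℕ) - m, hjm⟩ : Fin n)]
      · simp only [Matrix.one_apply, Fin.ext_iff]
        have : ((j : ℕ) - m) + m = (j : ℕ) := by omega
        simp [this]
      · intro k _ hk
        have : ¬ ((k : ℕ) = (j : ℕ) - m) := by
          intro hkk
          exact hk (Fin.ext hkk)
        simp [this]
      · intro h
        exact absurd (Finset.mem_univ _) h
  have hP : M.det ≠ 0 := by
    intro h0
    have h2 := RingHom.map_det (MvPolynomial.eval x0) M
    rw [RingHom.mapMatrix_apply, hMone, Matrix.det_one, h0, map_zero] at h2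
    exact zero_ne_one h2
  -- transfer along the linear equivalence
  haveI : Measure.IsAddHaarMeasure
      (volume : Measure ((Fin n → Fin n → ℝ) × (Fin n → Fin m → ℝ))) := by
    haveI : (volume : Measure (Fin n → Fin n → ℝ)).IsAddHaarMeasure := Measure.pi.isAddHaarMeasure _
    haveI : (volume : Measure (Fin n → Fin m → ℝ)).IsAddHaarMeasure := Measure.pi.isAddHaarMeasure _
    have h3 : Measure.IsAddHaarMeasure ((volume : Measure (Fin n → Fin n → ℝ)).prod
        (volume : Measure (Fin n → Fin m → ℝ))) := Measure.prod.instIsAddHaarMeasure _ _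
    exact h3
  refine null_of_linearEquiv_preimage_null volume volume L hSmeas ?_
  have hpre : (⇑L) ⁻¹' {p : (Fin n → Fin n → ℝ) × (Fin n → Fin m → ℝ) |
      (Matrix.of fun i j : Fin n =>
        if hj : (j : ℕ) < m then Matrix.of p.2 i ⟨(j : ℕ), hj⟩
        else (Matrix.of p.1 * Matrix.of p.2) i ⟨(j : ℕ) - m, by omega⟩).det = 0}
      = {x : ι → ℝ | MvPolynomial.eval x M.det = 0} := by
    ext x
    simp only [Set.mem_preimage, Set.mem_setOf_eq, heval x]
  rw [hpre]
  exact volume_zero_set_mvPolynomial M.det hP
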